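/- Let k be a positive integer that is not a power of 2 and let n be a positive integer. There exists a function x : Fin n → ℕ with every x i in S(k), with ∑ i, (1:ℚ)/(x i) = 1, and with k dividing x i for some i, if and only if (k,n) = (3,3), or k ≡ 0 (mod 4) and 4n ≥ k + 8, or k ≡ 1 (mod 4) and 4n ≥ k + 11, or k ≡ 2 (mod 4) and 4n ≥ k + 10, or k ≡ 3 (mod 4) and 4n ≥ k + 13. -/

import Mathlib

def IsRepX (k c M : ℕ) : Prop :=
  ∃ L : List ℕ, L.length = M ∧
    (∀ v ∈ L, ∃ a b : ℕ, a ≤ 2 ∧ 1 ≤ b ∧ v = 2 ^ a * k ^ b) ∧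
    (L.map fun v : ℕ => (1 : ℚ) / (v:ℚ)).sum = (c : ℚ) / (4 * k)

lemma isRepX_direct {k c M : ℕ} (hk : 3 ≤ k) (h1 : M ≤ c) (h2 : c ≤ 4 * M)
    (h3 : 4 * M ≠ c + 1) : IsRepX k c M := by
  obtain ⟨c0, c1, c2, hM, hc⟩ :
      ∃ c0 c1 c2 : ℕ, c0 + c1 + c2 = M ∧ 4 * c0 + 2 * c1 + c2 = c := by
    rcases le_or_gt c (2 * M) with h | h
    · exact ⟨0, c - M, 2 * M - c, by omega, by omega⟩
    · exact ⟨c / 2 + c % 2 - M, 2 * M - 2 * (c % 2) - c / 2, c % 2, by omega, by omega⟩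
  have hk0 : (k : ℚ) ≠ 0 := Nat.cast_ne_zero.mpr (by omega)
  refine ⟨List.replicate c0 k ++ List.replicate c1 (2 * k) ++ List.replicate c2 (4 * k),
    by simp only [List.length_append, List.length_replicate]; omega, ?_, ?_⟩
  · intro v hv
    simp only [List.mem_append, List.mem_replicate] at hv
    rcases hv with (⟨_, rfl⟩ | ⟨_, rfl⟩) | ⟨_, rfl⟩
    · exact ⟨0, 1, by norm_num⟩
    · exact ⟨1, 1, by norm_num⟩
    · exact ⟨2, 1, by norm_num⟩
  · have hcq : (4 * (c0:ℚ) + 2 * c1 + c2) = c := by exact_mod_cast hc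
    simp only [List.map_append, List.sum_append, List.map_replicate, List.sum_replicate,
      nsmul_eq_mul]
    rw [← hcq]
    push_cast
    field_simp
    ring

lemma isRepX_scale {k M : ℕ} (hk : 3 ≤ k) (h : IsRepX k k M) : IsRepX k 1 M := by
  obtain ⟨L, hlen, hmem, hsum⟩ := h
  have hk0 : (k : ℚ) ≠ 0 := Nat.cast_ne_zero.mpr (by omega)
  refine ⟨L.map (· * k), by simp [hlen], ?_, ?_⟩
  · intro v hv
    simp only [List.mem_map] at hv
    obtain ⟨w, hw, rfl⟩ := hv
    obtain ⟨a, b, ha, hb, rfl⟩ := hmem w hw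
    exact ⟨a, b + 1, ha, by omega, by rw [pow_succ]; ring⟩
  · rw [List.map_map]
    have hfe : ((fun v : ℕ => (1:ℚ)/(v:ℚ)) ∘ (· * k)) = fun v : ℕ => (1/(v:ℚ)) * (1/(k:ℚ)) := by
      funext v
      simp only [Function.comp]
      push_cast
      rw [one_div_mul_one_div]
    rw [hfe, List.sum_map_mul_right, hsum]
    field_simp
    ring

lemma isRepX_append {k c₁ c₂ M₁ M₂ : ℕ} (h₁ : IsRepX k c₁ M₁) (h₂ : IsRepX k c₂ M₂) :
    IsRepX k (c₁ + c₂) (M₁ + M₂) := by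
  obtain ⟨L₁, hl₁, hm₁, hs₁⟩ := h₁
  obtain ⟨L₂, hl₂, hm₂, hs₂⟩ := h₂
  refine ⟨L₁ ++ L₂, by simp [hl₁, hl₂], fun v hv => (List.mem_append.1 hv).elim (hm₁ v) (hm₂ v), ?_⟩
  rw [List.map_append, List.sum_append, hs₁, hs₂]
  push_cast
  ring

lemma isRepX_main {k : ℕ} (hk : 3 ≤ k) :
    ∀ M, (k + 3 + 2 * (k % 4 / 3)) / 4 ≤ M → IsRepX k k M := by
  intro M
  induction M using Nat.strong_induction_on with
  | _ M IH =>
    intro hM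
    rcases le_or_gt M k with h | h
    · exact isRepX_direct hk h (by omega) (by omega)
    · have h₁ : IsRepX k (k - 1) (min (k - 1) (M - (k + 3 + 2 * (k % 4 / 3)) / 4)) :=
        isRepX_direct hk (min_le_left _ _) (by omega) (by omega)
      have h₂ : IsRepX k 1 (M - min (k - 1) (M - (k + 3 + 2 * (k % 4 / 3)) / 4)) :=
        isRepX_scale hk (IH _ (by omega) (by omega))
      have h₃ := isRepX_append h₁ h₂
      have e1 : (k - 1) + 1 = k := by omega
      have e2 : min (k - 1) (M - (k + 3 + 2 * (k % 4 / 3)) / 4) +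
          (M - min (k - 1) (M - (k + 3 + 2 * (k % 4 / 3)) / 4)) = M := by omega
      rwa [e1, e2] at h₃

lemma refinedX {n : ℕ} (k : ℕ) (hk : 2 ≤ k) (D : Finset (Fin n)) (hD : D.Nonempty)
    (x a b : Fin n → ℕ)
    (hab : ∀ i ∈ D, x i = 2 ^ a i * k ^ b i)
    (ha : ∀ i ∈ D, a i ≤ 2)
    (hb : ∀ i ∈ D, 1 ≤ b i)
    (hsum : ∑ i ∈ D, (1 : ℚ) / (x i) = 1 / 4) :
    4 * D.card ≠ k + 1 := by
  intro hcard
  obtain ⟨i₁, hi₁⟩ := hD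
  set B := D.sup b with hB
  have hbB : ∀ i ∈ D, b i ≤ B := fun i hi => Finset.le_sup hi
  have hB1 : 1 ≤ B := le_trans (hb i₁ hi₁) (hbB i₁ hi₁)
  have hkpos : 0 < k := by omega
  have hcpos : 0 < k ^ (B - 1) := pow_pos hkpos _
  set t : Fin n → ℕ := fun i => 2 ^ (2 - a i) * k ^ (B - b i) with ht
  have hx0 : ∀ i ∈ D, ((x i : ℚ)) ≠ 0 := by
    intro i hi
    have : 0 < x i := by rw [hab i hi]; positivity
    exact_mod_cast this.ne'
  have key : ∀ i ∈ D, (t i : ℚ) = 4 * (k:ℚ) ^ B * (1 / (x i)) := by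
    intro i hi
    have h1 : t i * x i = 4 * k ^ B := by
      rw [hab i hi, ht]
      simp only
      rw [mul_mul_mul_comm, ← pow_add, ← pow_add,
        Nat.sub_add_cancel (ha i hi), Nat.sub_add_cancel (hbB i hi)]
      norm_num
    rw [mul_one_div, eq_div_iff (hx0 i hi)]
    exact_mod_cast congrArg (Nat.cast : ℕ → ℚ) h1
  have hsum_t : ∑ i ∈ D, t i = k ^ B := by
    have hq : ((∑ i ∈ D, t i : ℕ) : ℚ) = ((k ^ B : ℕ) : ℚ) := by
      push_cast
      calc ∑ i ∈ D, (t i : ℚ) = ∑ i ∈ D, 4 * (k:ℚ) ^ B * (1 / (x i)) :=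
            Finset.sum_congr rfl key
        _ = 4 * (k:ℚ) ^ B * ∑ i ∈ D, (1 : ℚ) / (x i) := by rw [Finset.mul_sum]
        _ = (k:ℚ) ^ B := by rw [hsum]; ring
    exact_mod_cast hq
  have hsplitB : B - 1 + 1 = B := by omega
  have h1 : ∑ _i ∈ D, (4 * k ^ (B - 1)) = k ^ B + k ^ (B - 1) := by
    rw [Finset.sum_const, smul_eq_mul]
    calc D.card * (4 * k ^ (B - 1)) = (4 * D.card) * k ^ (B - 1) := by ring
      _ = (k + 1) * k ^ (B - 1) := by rw [hcard]
      _ = k ^ (B - 1) * k + k ^ (B - 1) := by ring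
      _ = k ^ B + k ^ (B - 1) := by rw [← pow_succ, hsplitB]
  set E := D.filter (fun i => ¬ t i = 4 * k ^ (B - 1)) with hE
  set F := D.filter (fun i => t i = 4 * k ^ (B - 1)) with hF
  have hsplit1 : ∑ i ∈ F, t i + ∑ i ∈ E, t i = k ^ B := by
    rw [← hsum_t]; exact Finset.sum_filter_add_sum_filter_not D _ _
  have hsplit2 : ∑ _i ∈ F, (4 * k ^ (B - 1)) + ∑ _i ∈ E, (4 * k ^ (B - 1))
      = k ^ B + k ^ (B - 1) := by
    rw [← h1]; exact Finset.sum_filter_add_sum_filter_not D _ _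
  have hFt : ∑ i ∈ F, t i = ∑ _i ∈ F, (4 * k ^ (B - 1)) :=
    Finset.sum_congr rfl (fun i hi => (Finset.mem_filter.1 hi).2)
  have hEeq : ∑ _i ∈ E, (4 * k ^ (B - 1)) = ∑ i ∈ E, t i + k ^ (B - 1) := by omega
  have hEpt : ∀ i ∈ E, t i + k ^ (B - 1) < 4 * k ^ (B - 1) := by
    intro i hi
    have hiD : i ∈ D := Finset.filter_subset _ _ hi
    have hne : ¬ t i = 4 * k ^ (B - 1) := (Finset.mem_filter.1 hi).2
    rcases eq_or_lt_of_le (hb i hiD) with hb1 | hb2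
    · -- b i = 1
      have hbi : b i = 1 := hb1.symm
      rcases Nat.eq_zero_or_pos (a i) with ha0 | ha1
      · exfalso
        apply hne
        rw [ht]; simp only
        rw [ha0, hbi, Nat.sub_zero]
        norm_num
      · have h2a : 2 ^ (2 - a i) ≤ 2 := by
          have : 2 - a i ≤ 1 := by omega
          calc 2 ^ (2 - a i) ≤ 2 ^ 1 := Nat.pow_le_pow_right (by norm_num) this
            _ = 2 := rfl
        have htle : t i ≤ 2 * k ^ (B - 1) := by
          rw [ht]; simp only
          rw [hbi]
          exact Nat.mul_le_mul h2a le_rfl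
        omega
    · -- 2 ≤ b i
      have hB2 : 2 ≤ B := le_trans hb2 (hbB i hiD)
      have htle : t i ≤ 4 * k ^ (B - 2) := by
        rw [ht]; simp only
        apply Nat.mul_le_mul
        · calc 2 ^ (2 - a i) ≤ 2 ^ 2 := Nat.pow_le_pow_right (by norm_num) (by omega)
            _ = 4 := rfl
        · exact Nat.pow_le_pow_right (by omega) (by omega)
      have hkk : k ^ (B - 1) = k * k ^ (B - 2) := by
        rw [← pow_succ']
        congr 1
        omega
      have hc2 : 0 < k ^ (B - 2) := pow_pos hkpos _
      have : t i + k ^ (B - 1) < 4 * k ^ (B - 1) := by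
        rw [hkk]
        calc t i + k * k ^ (B - 2) ≤ 4 * k ^ (B - 2) + k * k ^ (B - 2) := by omega
          _ = (4 + k) * k ^ (B - 2) := by ring
          _ < (4 * k) * k ^ (B - 2) := by
              have h44 : 4 + k < 4 * k := by omega
              exact Nat.mul_lt_mul_of_lt_of_le h44 le_rfl hc2
          _ = 4 * (k * k ^ (B - 2)) := by ring
      exact this
  rcases E.eq_empty_or_nonempty with hEe | hEne
  · rw [hEe] at hEeq
    simp at hEeq
    omega
  · have hstrict : ∑ i ∈ E, (t i + k ^ (B - 1)) < ∑ _i ∈ E, (4 * k ^ (B - 1)) :=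
      Finset.sum_lt_sum_of_nonempty hEne hEpt
    rw [Finset.sum_add_distrib, Finset.sum_const, smul_eq_mul, hEeq] at hstrict
    have hcard1 : E.card * k ^ (B - 1) < 1 * k ^ (B - 1) := by omega
    have := Nat.lt_of_mul_lt_mul_right hcard1
    have := Finset.card_pos.mpr hEne
    omega

/-- Theorem 4.1: For a positive integer `k` that is not a power of 2, the equation
`∑ 1/xᵢ = 1` has a nontrivial solution in integers of the form `2^a * k^b`
(`a ∈ {0,1,2}`, `b ≥ 0`) with `n` terms iff `(k,n) = (3,3)` or the stated
inequalities according to `k mod 4` hold. -/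
theorem nontrivial_solution_iff (k n : ℕ) (hk : 0 < k)
    (hk2 : ¬ ∃ m : ℕ, k = 2 ^ m) (hn : 0 < n) :
    (∃ x : Fin n → ℕ,
        (∀ i, ∃ a b : ℕ, a ≤ 2 ∧ x i = 2 ^ a * k ^ b) ∧
        (∑ i, (1 : ℚ) / (x i)) = 1 ∧
        (∃ i, k ∣ x i)) ↔
      ((k = 3 ∧ n = 3) ∨
        (k % 4 = 0 ∧ 4 * n ≥ k + 8) ∨
        (k % 4 = 1 ∧ 4 * n ≥ k + 11) ∨
        (k % 4 = 2 ∧ 4 * n ≥ k + 10) ∨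
        (k % 4 = 3 ∧ 4 * n ≥ k + 13)) := by
  constructor
  · intro hex
    have hk3 : 3 ≤ k := by
      by_contra hlt
      interval_cases k
      · exact hk2 ⟨0, rfl⟩
      · exact hk2 ⟨1, rfl⟩
    obtain ⟨x, hS, hsum, i₀, hi₀⟩ := hex
    choose a b ha hx using hS
    have hxpos : ∀ i, 0 < x i := by
      intro i
      rw [hx i]
      have : 0 < k := by omega
      positivity
    have hq : ∀ i, (0:ℚ) < 1 / (x i) := by
      intro i
      have : (0:ℚ) < (x i : ℚ) := by exact_mod_cast hxpos i
      positivity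
    have hxk : ∀ i, k ∣ x i → k ≤ x i := fun i hd => Nat.le_of_dvd (hxpos i) hd
    have hn3' : 3 ≤ n ∨ (k = 3 ∧ n = 3) := by
      left
      by_contra hlt
      push_neg at hlt
      interval_cases n
      · have hi0 : i₀ = 0 := Subsingleton.elim _ _
        have hs1 : (1:ℚ) / (x 0) = 1 := by
          rw [← Fin.sum_univ_one (fun i => (1:ℚ)/(x i))]; exact hsum
        have hx1 : (x 0 : ℚ) = 1 := by rwa [one_div, inv_eq_one] at hs1
        have hx1' : x 0 = 1 := by exact_mod_cast hx1
        rw [hi0, hx1'] at hi₀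
        have hk1 : k = 1 := Nat.dvd_one.mp hi₀
        omega
      · have hother : ∃ j : Fin 2, j ≠ i₀ := by
          fin_cases i₀
          · exact ⟨1, by simp⟩
          · exact ⟨0, by simp [Fin.ext_iff]⟩
        obtain ⟨j, hj⟩ := hother
        have huniv : ({j, i₀} : Finset (Fin 2)) = Finset.univ := by
          apply Finset.eq_univ_of_card
          rw [Finset.card_pair hj]
          simp
        have hjs : (1:ℚ)/(x j) + 1/(x i₀) = 1 := by
          have h' := hsum
          rw [← huniv, Finset.sum_pair hj] at h'
          exact h'
        have hki : k ≤ x i₀ := hxk i₀ hi₀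
        have hile : (1:ℚ)/(x i₀) ≤ 1/3 := by
          apply one_div_le_one_div_of_le (by norm_num)
          have h1 : (3:ℚ) ≤ (k:ℚ) := by exact_mod_cast hk3
          have h2 : (k:ℚ) ≤ (x i₀ : ℚ) := by exact_mod_cast hki
          linarith
        have hxj : x j = 1 ∨ 2 ≤ x j := by have := hxpos j; omega
        rcases hxj with h1 | h2
        · rw [h1] at hjs
          norm_num at hjs
          linarith [hq i₀]
        · have h3 : (1:ℚ)/(x j) ≤ 1/2 := by
            apply one_div_le_one_div_of_le (by norm_num)
            exact_mod_cast h2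
          linarith
    rcases eq_or_ne k 3 with hke | hkne
    · -- k = 3 case
      by_cases hn3 : n = 3
      · exact Or.inl ⟨hke, hn3⟩
      · exact Or.inr (Or.inr (Or.inr (Or.inr ⟨by omega, by omega⟩)))
    · -- k ≥ 5
      have hk4 : k ≠ 4 := fun h => hk2 ⟨2, by omega⟩
      have hk5 : 5 ≤ k := by omega
      classical
      set D := Finset.univ.filter (fun i : Fin n => k ∣ x i) with hD
      set D' := Finset.univ.filter (fun i : Fin n => ¬ k ∣ x i) with hD'
      have hi₀D : i₀ ∈ D := by simp [hD, hi₀]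
      have hbD : ∀ i ∈ D, 1 ≤ b i := by
        intro i hi
        by_contra hb0
        have hb0' : b i = 0 := by omega
        have hdvd : k ∣ x i := (Finset.mem_filter.1 hi).2
        rw [hx i, hb0', pow_zero, mul_one] at hdvd
        obtain ⟨m, _, hm⟩ := (Nat.dvd_prime_pow Nat.prime_two).1 hdvd
        exact hk2 ⟨m, hm⟩
      have hD'24 : ∀ i ∈ D', x i = 2 ∨ x i = 4 := by
        intro i hi
        have hnd : ¬ k ∣ x i := (Finset.mem_filter.1 hi).2
        have hb0 : b i = 0 := by
          by_contra hb
          exact hnd (hx i ▸ dvd_mul_of_dvd_right (dvd_pow_self k hb) _)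
        have hxi : x i = 2 ^ a i := by rw [hx i, hb0, pow_zero, mul_one]
        have hai : a i = 0 ∨ a i = 1 ∨ a i = 2 := by have := ha i; omega
        rcases hai with h0 | h1 | h2
        · exfalso
          have hne : i ≠ i₀ := by rintro rfl; exact hnd hi₀
          have hpair : (1:ℚ)/(x i) + 1/(x i₀) ≤ 1 := by
            have h' := Finset.sum_le_sum_of_subset_of_nonneg (Finset.subset_univ ({i, i₀} : Finset (Fin n)))
              (fun j _ _ => le_of_lt (hq j))
            rw [Finset.sum_pair hne, hsum] at h'
            exact h'
          rw [hxi, h0, pow_zero] at hpair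
          norm_num at hpair
          exact (hxpos i₀).ne' hpair
        · left; rw [hxi, h1]; rfl
        · right; rw [hxi, h2]; rfl
      set A := D'.filter (fun i => x i = 2) with hA
      set Bs := D'.filter (fun i => ¬ x i = 2) with hBs
      set t2 := A.card with ht2
      set t4 := Bs.card with ht4
      set N := D.card with hN
      have hsA : ∑ i ∈ A, (1:ℚ)/(x i) = (t2:ℚ) * (1/2) := by
        rw [Finset.sum_congr rfl (fun i hi => ?_), Finset.sum_const, nsmul_eq_mul]
        rw [(Finset.mem_filter.1 hi).2]
        norm_num
      have hsB : ∑ i ∈ Bs, (1:ℚ)/(x i) = (t4:ℚ) * (1/4) := by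
        rw [Finset.sum_congr rfl (fun i hi => ?_), Finset.sum_const, nsmul_eq_mul]
        have hiD' : i ∈ D' := Finset.filter_subset _ _ hi
        have h4 : x i = 4 := by
          rcases hD'24 i hiD' with h | h
          · exact absurd h (Finset.mem_filter.1 hi).2
          · exact h
        rw [h4]
        norm_num
      have hsD' : ∑ i ∈ D', (1:ℚ)/(x i) = (t2:ℚ) * (1/2) + (t4:ℚ) * (1/4) := by
        rw [← Finset.sum_filter_add_sum_filter_not D' (fun i => x i = 2), hsA, hsB]
      have hsplit : ∑ i ∈ D, (1:ℚ)/(x i) + ∑ i ∈ D', (1:ℚ)/(x i) = 1 := by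
        rw [Finset.sum_filter_add_sum_filter_not]
        exact hsum
      have hσpos : 0 < ∑ i ∈ D, (1:ℚ)/(x i) :=
        Finset.sum_pos (fun i _ => hq i) ⟨i₀, hi₀D⟩
      have h3 : 2 * t2 + t4 ≤ 3 := by
        have h1 : ((2 * t2 + t4 : ℕ):ℚ) < 4 := by
          push_cast
          rw [hsD'] at hsplit
          linarith
        have h2 : (2 * t2 + t4 : ℕ) < 4 := by exact_mod_cast h1
        omega
      set m := 4 - (2 * t2 + t4) with hm
      have hσ : ∑ i ∈ D, (1:ℚ)/(x i) = (m:ℚ)/4 := by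
        have hmc : (m:ℚ) = 4 - 2*(t2:ℚ) - (t4:ℚ) := by
          rw [hm, Nat.cast_sub (by omega : 2 * t2 + t4 ≤ 4)]
          push_cast
          ring
        rw [hsD'] at hsplit
        rw [hmc]
        linarith
      have hcard : N + (t2 + t4) = n := by
        have hc1 : N + D'.card = n := by
          rw [hN, hD, hD']
          rw [Finset.card_filter_add_card_filter_not]
          simp
        have hc2 : t2 + t4 = D'.card := by
          rw [ht2, ht4, hA, hBs]
          exact Finset.card_filter_add_card_filter_not _
        omega
      have hcrude : m * k ≤ 4 * N := by
        have hb1 : ∑ i ∈ D, (1:ℚ)/(x i) ≤ N • ((1:ℚ)/k) := by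
          apply Finset.sum_le_card_nsmul
          intro i hi
          apply one_div_le_one_div_of_le
          · exact_mod_cast (by omega : 0 < k)
          · exact_mod_cast hxk i (Finset.mem_filter.1 hi).2
        rw [hσ, nsmul_eq_mul, mul_one_div] at hb1
        have hk0 : (0:ℚ) < (k:ℚ) := by exact_mod_cast (by omega : 0 < k)
        rw [div_le_div_iff₀ (by norm_num) hk0] at hb1
        have h2 : ((m * k : ℕ):ℚ) ≤ ((4 * N : ℕ):ℚ) := by push_cast; linarith
        exact_mod_cast h2
      by_cases hcase : m = 1 ∧ k % 4 = 3
      · have h14 : ∑ i ∈ D, (1:ℚ)/(x i) = 1/4 := by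
          rw [hσ, hcase.1]
          norm_num
        have hne := refinedX k (by omega) D ⟨i₀, hi₀D⟩ x a b
          (fun i _ => hx i) (fun i _ => ha i) hbD h14
        have hm1 : m = 1 := hcase.1
        have hk43 : k % 4 = 3 := hcase.2
        rw [hm1, one_mul] at hcrude
        omega
      · have hmv : m = 1 ∨ m = 2 ∨ m = 3 ∨ m = 4 := by omega
        rcases hmv with h | h | h | h <;> rw [h] at hcrude
        · have hk43 : k % 4 ≠ 3 := fun hc => hcase ⟨h, hc⟩
          rw [one_mul] at hcrude
          omega
        · omega
        · omega
        · omega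
  · intro h
    have hk3 : 3 ≤ k := by
      by_contra hlt
      interval_cases k
      · exact hk2 ⟨0, rfl⟩
      · exact hk2 ⟨1, rfl⟩
    rcases h with ⟨hke, hne⟩ | h
    · -- k = 3, n = 3
      subst hke hne
      refine ⟨![3, 3, 3], ?_, ?_, ⟨0, by norm_num⟩⟩
      · intro i
        fin_cases i <;> exact ⟨0, 1, by norm_num⟩
      · simp [Fin.sum_univ_three]
        norm_num
    · have hM : (k + 3 + 2 * (k % 4 / 3)) / 4 ≤ n - 2 ∧ 2 ≤ n := by omega
      obtain ⟨L, hlen, hmem, hsum⟩ := isRepX_main hk3 (n - 2) hM.1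
      have hk0 : (k : ℚ) ≠ 0 := Nat.cast_ne_zero.mpr (by omega)
      have hlf : (2 :: 4 :: L).length = n := by simp [hlen]; omega
      have hmemf : ∀ v ∈ (2 :: 4 :: L), ∃ a b : ℕ, a ≤ 2 ∧ v = 2 ^ a * k ^ b := by
        intro v hv
        rcases List.mem_cons.1 hv with rfl | hv
        · exact ⟨1, 0, by norm_num⟩
        rcases List.mem_cons.1 hv with rfl | hv
        · exact ⟨2, 0, by norm_num⟩
        · obtain ⟨a, b, ha, _, rfl⟩ := hmem v hv
          exact ⟨a, b, ha, rfl⟩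
      have hsumf : ((2 :: 4 :: L).map fun v : ℕ => (1 : ℚ) / (v:ℚ)).sum = 1 := by
        simp only [List.map_cons, List.sum_cons, hsum]
        have h4 : (k : ℚ) / (4 * k) = 1 / 4 := by field_simp
        rw [h4]
        norm_num
      have hLne : L ≠ [] := by
        intro hcontra
        rw [hcontra] at hlen
        simp at hlen
        omega
      obtain ⟨w, hw⟩ := List.exists_mem_of_ne_nil L hLne
      subst hlf
      refine ⟨(2 :: 4 :: L).get, ?_, ?_, ?_⟩
      · intro i
        exact hmemf _ (List.get_mem _ i)
      · have hgen : ∀ (P : List ℕ), (∑ i, (1 : ℚ) / ((P.get i : ℕ):ℚ)) = (P.map fun v : ℕ => (1 : ℚ) / (v:ℚ)).sum := by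
          intro P
          induction P with
          | nil => simp
          | cons hd tl ih =>
            simp only [List.length_cons, Fin.sum_univ_succ, List.map_cons, List.sum_cons, ← ih]
            rfl
        rw [hgen]
        exact hsumf
      · have hwf : w ∈ (2 :: 4 :: L) := List.mem_cons_of_mem _ (List.mem_cons_of_mem _ hw)
        obtain ⟨j, hj⟩ := List.mem_iff_get.1 hwf
        refine ⟨j, ?_⟩
        rw [hj]
        obtain ⟨a, b, _, hb, rfl⟩ := hmem w hw
        exact dvd_mul_of_dvd_right (dvd_pow_self k (by omega)) _
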